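/- Let B be a skew-symmetrizable integer matrix indexed by a finite set I with a decomposition I = I_+ ⊔ I_− such that B_{ij} ≠ 0 implies (i,j) ∈ I_+ × I_− or (i,j) ∈ I_− × I_+ (condition (B1)). Let μ_+ = ∏_{i∈I_+} μ_i and μ_− = ∏_{i∈I_−} μ_i (these composed mutations are independent of the order by (B1)). Then μ_+(B) = μ_−(B) = −B if and only if for every ε ∈ {+,−} and all i, j ∈ I_ε, we have ∑_{k: B_{ik}>0, B_{kj}>0} B_{ik}B_{kj} = ∑_{k: B_{ik}<0, B_{kj}<0} B_{ik}B_{kj}. -/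

import Mathlib

/-- Matrix mutation `μ_k(B)` of an integer matrix. -/
def matMut {I : Type*} [DecidableEq I] (B : I → I → ℤ) (k : I) : I → I → ℤ :=
  fun i j =>
    if i = k ∨ j = k then -B i j
    else B i j + (|B i k| * B k j + B i k * |B k j|) / 2

lemma corr_zero_left (b : ℤ) : (|(0:ℤ)| * b + 0 * |b|) / 2 = 0 := by simp
lemma corr_zero_right (a : ℤ) : (|a| * (0:ℤ) + a * |(0:ℤ)|) / 2 = 0 := by simp

lemma fold_spec {I : Type*} [DecidableEq I] (eps : I → Bool) (b : Bool)
    (l : List I) (hn : l.Nodup) (hl : ∀ k ∈ l, eps k = b) :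
    ∀ (B : I → I → ℤ), (∀ i j, eps i = b → eps j = b → B i j = 0) →
    ∀ i j, l.foldl (fun M k => matMut M k) B i j =
      (if i ∈ l then (-1:ℤ) else 1) * (if j ∈ l then (-1:ℤ) else 1) * B i j +
      if eps i ≠ b ∧ eps j ≠ b then
        (l.map (fun k => (|B i k| * B k j + B i k * |B k j|) / 2)).sum else 0 := by
  induction l with
  | nil => intro B hB i j; simp
  | cons k t ih =>
    intro B hB i j
    have hkt : k ∉ t := (List.nodup_cons.mp hn).1
    have htn : t.Nodup := (List.nodup_cons.mp hn).2
    have hkb : eps k = b := hl k ((List.mem_cons_self (a := k) (l := t)))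
    have htl : ∀ k' ∈ t, eps k' = b := fun k' hk' => hl k' (List.mem_cons_of_mem k hk')
    set B' := matMut B k with hB'def
    have hB' : ∀ i' j', eps i' = b → eps j' = b → B' i' j' = 0 := by
      intro i' j' hi' hj'
      simp only [hB'def, matMut]
      split
      · rw [hB i' j' hi' hj']; ring
      · rw [hB i' j' hi' hj', hB i' k hi' hkb, corr_zero_left, add_zero]
    have hrow : ∀ i' k', k' ∈ t → i' ≠ k → B' i' k' = B i' k' := by
      intro i' k' hk' hik
      have hkk : k' ≠ k := fun h => hkt (h ▸ hk')
      simp only [hB'def, matMut, if_neg (by tauto : ¬(i' = k ∨ k' = k))]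
      rw [hB k k' hkb (htl k' hk'), corr_zero_right, add_zero]
    have hcol : ∀ k' j', k' ∈ t → j' ≠ k → B' k' j' = B k' j' := by
      intro k' j' hk' hjk
      have hkk : k' ≠ k := fun h => hkt (h ▸ hk')
      simp only [hB'def, matMut, if_neg (by tauto : ¬(k' = k ∨ j' = k))]
      rw [hB k' k (htl k' hk') hkb, corr_zero_left, add_zero]
    rw [List.foldl_cons]
    rw [ih htn htl B' hB' i j]
    by_cases hcond : eps i ≠ b ∧ eps j ≠ b
    · -- i, j not in the part b
      have hik : i ≠ k := fun h => hcond.1 (h ▸ hkb)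
      have hjk : j ≠ k := fun h => hcond.2 (h ▸ hkb)
      have hit : i ∉ k :: t := fun h => hcond.1 (hl i h)
      have hjt : j ∉ k :: t := fun h => hcond.2 (hl j h)
      have hit' : i ∉ t := fun h => hit (List.mem_cons_of_mem k h)
      have hjt' : j ∉ t := fun h => hjt (List.mem_cons_of_mem k h)
      rw [if_neg hit', if_neg hjt', if_neg hit, if_neg hjt, if_pos hcond, if_pos hcond]
      have hmap : t.map (fun k' => (|B' i k'| * B' k' j + B' i k' * |B' k' j|) / 2)
          = t.map (fun k' => (|B i k'| * B k' j + B i k' * |B k' j|) / 2) := by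
        apply List.map_congr_left
        intro k' hk'
        rw [hrow i k' hk' hik, hcol k' j hk' hjk]
      rw [hmap]
      have hBij : B' i j = B i j + (|B i k| * B k j + B i k * |B k j|) / 2 := by
        simp only [hB'def, matMut, if_neg (by tauto : ¬(i = k ∨ j = k))]
      rw [hBij, List.map_cons, List.sum_cons]
      ring
    · rw [if_neg hcond, if_neg hcond, add_zero, add_zero]
      push_neg at hcond
      by_cases hik : i = k <;> by_cases hjk : j = k
      · have hB'ij : B' i j = -B i j := by
          simp only [hB'def, matMut]; rw [if_pos (Or.inl hik)]
        have h0 : B i j = 0 := hB i j (hik ▸ hkb) (hjk ▸ hkb)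
        rw [hB'ij, h0]
        simp
      · have hB'ij : B' i j = -B i j := by
          simp only [hB'def, matMut]; rw [if_pos (Or.inl hik)]
        rw [hB'ij, if_neg (show i ∉ t from hik ▸ hkt),
          if_pos (show i ∈ k :: t from hik ▸ (List.mem_cons_self (a := k) (l := t)))]
        simp only [List.mem_cons, hjk, false_or]
        split_ifs <;> ring
      · have hB'ij : B' i j = -B i j := by
          simp only [hB'def, matMut]; rw [if_pos (Or.inr hjk)]
        rw [hB'ij, if_neg (show j ∉ t from hjk ▸ hkt),
          if_pos (show j ∈ k :: t from hjk ▸ (List.mem_cons_self (a := k) (l := t)))]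
        simp only [List.mem_cons, hik, false_or]
        split_ifs <;> ring
      · have hB'ij : B' i j = B i j := by
          simp only [hB'def, matMut, if_neg (show ¬(i = k ∨ j = k) by tauto)]
          by_cases hi : eps i = b
          · rw [hB i k hi hkb, corr_zero_left, add_zero]
          · rw [hB k j hkb (hcond hi), corr_zero_right, add_zero]
        rw [hB'ij]
        simp only [List.mem_cons, hik, hjk, false_or]

lemma corr_eq (a b : ℤ) : (|a| * b + a * |b|) / 2 =
    if 0 < a ∧ 0 < b then a * b else if a < 0 ∧ b < 0 then -(a * b) else 0 := by
  have h2 : ∀ x : ℤ, (x * 2) / 2 = x := fun x => Int.mul_ediv_cancel x (by norm_num)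
  rcases lt_trichotomy a 0 with ha | rfl | ha <;> rcases lt_trichotomy b 0 with hb | rfl | hb
  · rw [abs_of_neg ha, abs_of_neg hb, if_neg (by omega), if_pos ⟨ha, hb⟩,
      show -a * b + a * -b = -(a * b) * 2 by ring, h2]
  · simp
  · rw [abs_of_neg ha, abs_of_pos hb, if_neg (by omega), if_neg (by omega),
      show -a * b + a * b = 0 * 2 by ring, h2]
  · simp
  · simp
  · simp
  · rw [abs_of_pos ha, abs_of_neg hb, if_neg (by omega), if_neg (by omega),
      show a * b + a * -b = 0 * 2 by ring, h2]
  · simp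
  · rw [abs_of_pos ha, abs_of_pos hb, if_pos ⟨ha, hb⟩,
      show a * b + a * b = (a * b) * 2 by ring, h2]

lemma sum_corr {I : Type*} [Fintype I] [DecidableEq I] (B : I → I → ℤ) (eps : I → Bool)
    (hB1 : ∀ i j, B i j ≠ 0 → eps i ≠ eps j) (b : Bool) (l : List I) (hn : l.Nodup)
    (hmem : ∀ i, i ∈ l ↔ eps i = b) (i j : I) (hi : eps i ≠ b) :
    (l.map (fun k => (|B i k| * B k j + B i k * |B k j|) / 2)).sum =
      (∑ k ∈ Finset.univ.filter (fun k => 0 < B i k ∧ 0 < B k j), B i k * B k j) -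
        ∑ k ∈ Finset.univ.filter (fun k => B i k < 0 ∧ B k j < 0), B i k * B k j := by
  rw [← List.sum_toFinset _ hn]
  rw [show l.toFinset = Finset.univ.filter (fun k => eps k = b) by ext k; simp [hmem]]
  rw [Finset.sum_filter]
  have hpt : ∀ k ∈ Finset.univ,
      (if eps k = b then (|B i k| * B k j + B i k * |B k j|) / 2 else 0)
      = (if 0 < B i k ∧ 0 < B k j then B i k * B k j else 0)
        - (if B i k < 0 ∧ B k j < 0 then B i k * B k j else 0) := by
    intro k _
    by_cases hk : eps k = b
    · rw [if_pos hk, corr_eq]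
      split_ifs with h1 h2 <;> try ring
      exact absurd (h1.1.trans h2.1) (lt_irrefl _)
    · have h0 : B i k = 0 := by
        by_contra h
        exact (hB1 i k h) (by revert hi hk; cases eps i <;> cases eps k <;> cases b <;> simp)
      rw [if_neg hk, h0]
      simp
  rw [Finset.sum_congr rfl hpt, Finset.sum_sub_distrib, ← Finset.sum_filter, ← Finset.sum_filter]


/-- Under condition (B1) (nonzero entries only between the parts `I_+` and `I_−`,
the parts being given by `eps`), the condition (B2), namely
`μ_+(B) = μ_−(B) = −B` for the composed mutations over `I_+` and `I_−`
(here realized by folding over lists `lp`, `lm` enumerating the two parts),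
is equivalent to: for all `i, j` in the same part,
`∑_{k : B_{ik}>0, B_{kj}>0} B_{ik}B_{kj} = ∑_{k : B_{ik}<0, B_{kj}<0} B_{ik}B_{kj}`. -/
theorem B2_iff_sum_condition {I : Type*} [Fintype I] [DecidableEq I]
    (B : I → I → ℤ) (eps : I → Bool) (d : I → ℤ) (hd : ∀ i, 0 < d i)
    (hskew : ∀ i j, d i * B i j = -(d j * B j i))
    (hB1 : ∀ i j, B i j ≠ 0 → eps i ≠ eps j)
    (lp lm : List I) (hpn : lp.Nodup) (hmn : lm.Nodup)
    (hpmem : ∀ i, i ∈ lp ↔ eps i = true)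
    (hmmem : ∀ i, i ∈ lm ↔ eps i = false) :
    (lp.foldl (fun M k => matMut M k) B = -B ∧
      lm.foldl (fun M k => matMut M k) B = -B) ↔
      ∀ i j, eps i = eps j →
        (∑ k ∈ Finset.univ.filter (fun k => 0 < B i k ∧ 0 < B k j), B i k * B k j) =
          ∑ k ∈ Finset.univ.filter (fun k => B i k < 0 ∧ B k j < 0), B i k * B k j := by
  have key : ∀ (b : Bool) (l : List I), l.Nodup → (∀ i, i ∈ l ↔ eps i = b) →
      ((l.foldl (fun M k => matMut M k) B = -B) ↔
        ∀ i j, eps i ≠ b → eps j ≠ b →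
          (∑ k ∈ Finset.univ.filter (fun k => 0 < B i k ∧ 0 < B k j), B i k * B k j) =
            ∑ k ∈ Finset.univ.filter (fun k => B i k < 0 ∧ B k j < 0), B i k * B k j) := by
    intro b l hn hmem
    have hl : ∀ k ∈ l, eps k = b := fun k hk => (hmem k).mp hk
    have hB0 : ∀ i j, eps i = b → eps j = b → B i j = 0 := by
      intro i j hi hj; by_contra h; exact hB1 i j h (hi.trans hj.symm)
    constructor
    · intro h i j hi hj
      have hf := congrFun (congrFun h i) j
      rw [fold_spec eps b l hn hl B hB0 i j] at hf
      rw [if_neg (fun hh => hi (hl i hh)), if_neg (fun hh => hj (hl j hh)),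
        if_pos ⟨hi, hj⟩, one_mul, one_mul,
        sum_corr B eps hB1 b l hn hmem i j hi] at hf
      simp only [Pi.neg_apply] at hf
      have h0 : B i j = 0 := by
        by_contra hne
        exact hB1 i j hne (by revert hi hj; cases eps i <;> cases eps j <;> cases b <;> simp)
      rw [h0, neg_zero, zero_add] at hf
      linarith
    · intro h
      funext i j
      rw [fold_spec eps b l hn hl B hB0 i j]
      simp only [Pi.neg_apply]
      by_cases hcond : eps i ≠ b ∧ eps j ≠ b
      · rw [if_pos hcond, if_neg (fun hh => hcond.1 (hl i hh)),
          if_neg (fun hh => hcond.2 (hl j hh)), one_mul, one_mul,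
          sum_corr B eps hB1 b l hn hmem i j hcond.1]
        have h0 : B i j = 0 := by
          by_contra hne
          exact hB1 i j hne (by revert hcond; cases eps i <;> cases eps j <;> cases b <;> simp)
        have hS := h i j hcond.1 hcond.2
        rw [h0, neg_zero, zero_add]
        linarith
      · rw [if_neg hcond, add_zero]
        by_cases h0 : B i j = 0
        · rw [h0]
          split_ifs <;> ring
        · have hne := hB1 i j h0
          by_cases hi : eps i = b
          · have hj : eps j ≠ b := fun hj => hne (hi.trans hj.symm)
            rw [if_pos ((hmem i).mpr hi), if_neg (fun hh => hj (hl j hh))]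
            ring
          · have hj : eps j = b := by
              rcases not_and_or.mp hcond with h' | h'
              · exact absurd (not_not.mp h') hi
              · exact not_not.mp h'
            rw [if_neg (fun hh => hi (hl i hh)), if_pos ((hmem j).mpr hj)]
            ring
  rw [key true lp hpn hpmem, key false lm hmn hmmem]
  constructor
  · rintro ⟨hp, hm⟩ i j hij
    cases hb : eps i with
    | false => exact hp i j (by simp [hb]) (by rw [← hij, hb]; simp)
    | true => exact hm i j (by simp [hb]) (by rw [← hij, hb]; simp)
  · intro h
    constructor
    · intro i j hi hj
      exact h i j (by revert hi hj; cases eps i <;> cases eps j <;> simp)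
    · intro i j hi hj
      exact h i j (by revert hi hj; cases eps i <;> cases eps j <;> simp)
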